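/- Let p be an odd prime and let d, e, f be positive integers with f < d < e, and let G = M₂(p,d,e,f) with canonical generators a, b. Then G is p^{d−f}-abelian, i.e. (xy)^{p^{d−f}} = x^{p^{d−f}} y^{p^{d−f}} for all x, y ∈ G, and the center of G equals the subgroup generated by a^{p^{d−f}} and b^{p^{d−f}}. -/

import Mathlib

/-- Relators for the group `M₁(p,d,e,f) = ⟨a, b ∣ a^(p^e) = b^(p^d) = 1, b⁻¹ab = a^(1+p^f)⟩`,
where `a` is generator `0` and `b` is generator `1`. -/
def M1rels (p d e f : ℕ) : Set (FreeGroup (Fin 2)) :=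
  {FreeGroup.of 0 ^ p ^ e, FreeGroup.of 1 ^ p ^ d,
    (FreeGroup.of 1)⁻¹ * FreeGroup.of 0 * FreeGroup.of 1 * (FreeGroup.of 0 ^ (1 + p ^ f))⁻¹}

/-- The metacyclic group `M₁(p,d,e,f) = ⟨a, b ∣ a^(p^e) = b^(p^d) = 1, b⁻¹ab = a^(1+p^f)⟩`. -/
abbrev M1 (p d e f : ℕ) : Type := PresentedGroup (M1rels p d e f)

/-- The canonical generator `a` of `M₁(p,d,e,f)`. -/
def M1a (p d e f : ℕ) : M1 p d e f := PresentedGroup.of 0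

/-- The canonical generator `b` of `M₁(p,d,e,f)`. -/
def M1b (p d e f : ℕ) : M1 p d e f := PresentedGroup.of 1

/-- Relators for the group `M₂(p,d,e,f) = ⟨a, b ∣ a^(p^d) = b^(p^e) = 1, b⁻¹ab = a^(1+p^f)⟩`,
where `a` is generator `0` and `b` is generator `1`. -/
def M2rels (p d e f : ℕ) : Set (FreeGroup (Fin 2)) :=
  {FreeGroup.of 0 ^ p ^ d, FreeGroup.of 1 ^ p ^ e,
    (FreeGroup.of 1)⁻¹ * FreeGroup.of 0 * FreeGroup.of 1 * (FreeGroup.of 0 ^ (1 + p ^ f))⁻¹}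

/-- The metacyclic group `M₂(p,d,e,f) = ⟨a, b ∣ a^(p^d) = b^(p^e) = 1, b⁻¹ab = a^(1+p^f)⟩`. -/
abbrev M2 (p d e f : ℕ) : Type := PresentedGroup (M2rels p d e f)

/-- The canonical generator `a` of `M₂(p,d,e,f)`. -/
def M2a (p d e f : ℕ) : M2 p d e f := PresentedGroup.of 0

/-- The canonical generator `b` of `M₂(p,d,e,f)`. -/
def M2b (p d e f : ℕ) : M2 p d e f := PresentedGroup.of 1

/-- Relators for the group
`M₃(p,d,e,h,f) = ⟨a, b ∣ a^(p^h) = 1, b^(p^(d+e-h)) = a^(p^d), b⁻¹ab = a^(1+p^f)⟩`,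
where `a` is generator `0` and `b` is generator `1`. -/
def M3rels (p d e h f : ℕ) : Set (FreeGroup (Fin 2)) :=
  {FreeGroup.of 0 ^ p ^ h, FreeGroup.of 1 ^ p ^ (d + e - h) * (FreeGroup.of 0 ^ p ^ d)⁻¹,
    (FreeGroup.of 1)⁻¹ * FreeGroup.of 0 * FreeGroup.of 1 * (FreeGroup.of 0 ^ (1 + p ^ f))⁻¹}

/-- The non-split metacyclic group
`M₃(p,d,e,h,f) = ⟨a, b ∣ a^(p^h) = 1, b^(p^(d+e-h)) = a^(p^d), b⁻¹ab = a^(1+p^f)⟩`. -/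
abbrev M3 (p d e h f : ℕ) : Type := PresentedGroup (M3rels p d e h f)

/-- The canonical generator `a` of `M₃(p,d,e,h,f)`. -/
def M3a (p d e h f : ℕ) : M3 p d e h f := PresentedGroup.of 0

/-- The canonical generator `b` of `M₃(p,d,e,h,f)`. -/
def M3b (p d e h f : ℕ) : M3 p d e h f := PresentedGroup.of 1

/-- `(α, β)` is an exact `(m,n)`-bicyclic pair of `G`: `α` has order `m`, `β` has order `n`,
`⟨α⟩ ∩ ⟨β⟩ = 1`, and `G = ⟨α⟩⟨β⟩`. -/
def IsExactBicyclicPair {G : Type*} [Group G] (m n : ℕ) (α β : G) : Prop :=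
  orderOf α = m ∧ orderOf β = n ∧
    Subgroup.zpowers α ⊓ Subgroup.zpowers β = ⊥ ∧
    ∀ g : G, ∃ i j : ℤ, g = α ^ i * β ^ j

section IntLemmas
open Finset

lemma zlem1 (x : ℤ) (n : ℕ) : x ^ 2 ∣ (1 + x) ^ n - (1 + n * x) := by
  induction n with
  | zero => simp
  | succ n ih =>
    have : (1+x)^(n+1) - (1+(n+1)*x) = (1+x) * ((1+x)^n - (1+n*x)) + n * x^2 := by
      push_cast; ring
    rw [show ((n+1 : ℕ):ℤ) = (n:ℤ)+1 by push_cast; ring, this]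
    exact dvd_add (Dvd.dvd.mul_left ih _) ⟨n, by ring⟩

lemma zlem2 {p : ℕ} (hodd : Odd p) {g : ℕ} (hg : 1 ≤ g) {w : ℤ}
    (hw : (p:ℤ)^g ∣ w - 1) : (p:ℤ)^(g+1) ∣ (∑ i ∈ range p, w ^ i) - p := by
  obtain ⟨c, hc⟩ := hw
  have hw' : w = 1 + (p:ℤ)^g * c := by linarith
  obtain ⟨m, hm⟩ := hodd
  have key : ∀ i : ℕ, ((p:ℤ)^g)^2 ∣ w^i - (1 + i * ((p:ℤ)^g * c)) := fun i => by
    rw [hw']; exact (Dvd.intro (c^2) (by ring)).trans (zlem1 ((p:ℤ)^g * c) i)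
  have hsum : ((p:ℤ)^g)^2 ∣ (∑ i ∈ range p, w^i) - ∑ i ∈ range p, (1 + (i:ℤ) * ((p:ℤ)^g * c)) := by
    rw [← Finset.sum_sub_distrib]
    exact Finset.dvd_sum (fun i _ => key i)
  have hgauss : (∑ i ∈ range p, (i:ℤ)) = p * m := by
    have h2 : ((∑ i ∈ range p, (i:ℤ))) * 2 = p * (p-1) := by
      have := Finset.sum_range_id_mul_two p
      have : ((∑ i ∈ range p, i) * 2 : ℕ) = (p * (p-1) : ℕ) := by rw [this]
      calc (∑ i ∈ range p, (i:ℤ)) * 2 = ((∑ i ∈ range p, i) * 2 : ℕ) := by push_cast; ring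
        _ = ((p * (p-1) : ℕ) : ℤ) := by rw [this]
        _ = p * (p-1) := by
            push_cast [Nat.cast_sub (by omega : 1 ≤ p)]; ring
    have hp1 : (p:ℤ) - 1 = 2*m := by omega
    have : ((∑ i ∈ range p, (i:ℤ))) * 2 = (p * m) * 2 := by rw [h2, hp1]; ring
    exact mul_right_cancel₀ (by norm_num) this
  have hsum2 : (∑ i ∈ range p, (1 + (i:ℤ) * ((p:ℤ)^g * c))) - p = (p:ℤ)^(g+1) * (m * c) := by
    rw [Finset.sum_add_distrib, ← Finset.sum_mul, hgauss]
    simp [pow_succ]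
    ring
  have h1 : (p:ℤ)^(g+1) ∣ ((p:ℤ)^g)^2 := by
    rw [← pow_mul]
    exact pow_dvd_pow _ (by omega)
  have : (∑ i ∈ range p, w ^ i) - p =
      ((∑ i ∈ range p, w^i) - ∑ i ∈ range p, (1 + (i:ℤ) * ((p:ℤ)^g * c)))
      + ((∑ i ∈ range p, (1 + (i:ℤ) * ((p:ℤ)^g * c))) - p) := by ring
  rw [this]
  exact dvd_add (h1.trans hsum) ⟨m * c, hsum2⟩

/-- Geometric sum factorization: `S_{m*n}(w) = S_n(w) * S_m(w^n)`. -/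
lemma zlem6 (w : ℤ) (n : ℕ) : ∀ m : ℕ, (∑ i ∈ range (m * n), w ^ i)
    = (∑ i ∈ range n, w ^ i) * (∑ j ∈ range m, (w ^ n) ^ j) := by
  intro m
  induction m with
  | zero => simp
  | succ m ih =>
    rw [Nat.succ_mul, Finset.sum_range_add, ih, Finset.sum_range_succ]
    have : (∑ i ∈ range n, w ^ (m * n + i)) = (w^n)^m * ∑ i ∈ range n, w ^ i := by
      rw [Finset.mul_sum]
      refine Finset.sum_congr rfl (fun i _ => ?_)
      rw [← pow_mul, ← pow_add]; ring_nf
    rw [this]; ring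

/-- `p^g ∣ w - 1 → p^(g+1) ∣ w^p - 1` -/
lemma zlem7 {p : ℕ} (hodd : Odd p) {g : ℕ} (hg : 1 ≤ g) {w : ℤ}
    (hw : (p:ℤ)^g ∣ w - 1) : (p:ℤ)^(g+1) ∣ w ^ p - 1 := by
  obtain ⟨α, hα⟩ := zlem2 hodd hg hw
  obtain ⟨c, hc⟩ := hw
  have : w ^ p - 1 = (w - 1) * (∑ i ∈ range p, w ^ i) := (mul_geom_sum w p).symm
  rw [this, hc, (by linarith : (∑ i ∈ range p, w ^ i) = (p:ℤ) + (p:ℤ)^(g+1) * α)]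
  exact ⟨c + (p:ℤ)^g * c * α, by push_cast; ring⟩

/-- Key geometric sum lemma. -/
lemma zlem5 {p : ℕ} (hodd : Odd p) : ∀ (k g : ℕ), 1 ≤ g → ∀ w : ℤ, (p:ℤ)^g ∣ w - 1 →
    (p:ℤ)^(g+k) ∣ (∑ i ∈ range (p^k), w ^ i) - (p:ℤ)^k := by
  intro k
  induction k with
  | zero => intro g hg w hw; simp
  | succ k ih =>
    intro g hg w hw
    obtain ⟨α, hα⟩ := zlem2 hodd hg hw
    obtain ⟨β, hβ⟩ := ih (g+1) (by omega) (w^p) (by simpa [pow_one] using zlem7 hodd hg hw)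
    rw [pow_succ, zlem6 w p (p^k),
      (by linarith : (∑ i ∈ range p, w ^ i) = (p:ℤ) + (p:ℤ)^(g+1) * α),
      (by linarith : (∑ j ∈ range (p^k), (w^p) ^ j) = (p:ℤ)^k + (p:ℤ)^(g+1+k) * β)]
    refine ⟨(p:ℤ) * β + α + (p:ℤ)^(g+1) * α * β, ?_⟩
    push_cast; ring

/-- `(1+p^f)^(p^j) = 1 + p^(f+j) * c` with `p ∣ c - 1`. -/
lemma zlem4 {p : ℕ} (hodd : Odd p) {f : ℕ} (hf : 1 ≤ f) : ∀ j : ℕ,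
    ∃ c : ℤ, (1 + (p:ℤ)^f) ^ (p^j) = 1 + (p:ℤ)^(f+j) * c ∧ (p:ℤ) ∣ c - 1 := by
  intro j
  induction j with
  | zero => exact ⟨1, by norm_num⟩
  | succ j ih =>
    obtain ⟨c, hc, hc1⟩ := ih
    have hdvd : (p:ℤ)^(f+j) ∣ (1 + (p:ℤ)^f) ^ (p^j) - 1 := ⟨c, by linarith⟩
    obtain ⟨α, hα⟩ := zlem2 hodd (by omega : 1 ≤ f + j) hdvd
    have key : ((1 + (p:ℤ)^f) ^ (p^j)) ^ p - 1
        = ((1 + (p:ℤ)^f) ^ (p^j) - 1) * (∑ i ∈ range p, ((1 + (p:ℤ)^f) ^ (p^j)) ^ i) :=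
      (mul_geom_sum _ p).symm
    have hpow : (p:ℤ)^(f+j) = p * (p:ℤ)^(f+j-1) := by
      rw [← pow_succ']; congr 1; omega
    refine ⟨c * (1 + (p:ℤ)^(f+j) * α), ?_, ?_⟩
    · have hx : (1 + (p:ℤ)^f) ^ (p^(j+1)) = ((1 + (p:ℤ)^f) ^ (p^j)) ^ p := by
        rw [pow_succ, pow_mul]
      have h2 : ((1 + (p:ℤ)^f) ^ (p^j)) ^ p
          = 1 + ((1 + (p:ℤ)^f) ^ (p^j) - 1) * (∑ i ∈ range p, ((1 + (p:ℤ)^f) ^ (p^j)) ^ i) := by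
        linarith [key]
      rw [hx, h2, (show (1 + (p:ℤ)^f) ^ (p^j) - 1 = (p:ℤ)^(f+j) * c by linarith),
        (show (∑ i ∈ range p, ((1 + (p:ℤ)^f) ^ (p^j)) ^ i) = (p:ℤ) + (p:ℤ)^(f+j+1) * α
          by linarith),
        (show f + (j+1) = (f+j)+1 by ring)]
      push_cast; ring
    · obtain ⟨m, hm⟩ := hc1
      have hc' : c = 1 + p * m := by linarith
      exact ⟨m + c * (p:ℤ)^(f+j-1) * α, by rw [hc', hpow]; push_cast; ring⟩

end IntLemmas

namespace Stmt5Aux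
open Finset Multiplicative SemidirectProduct

structure Hyp (p d e f : ℕ) : Prop where
  hp : p.Prime
  hodd : Odd p
  hf : 0 < f
  hfd : f < d
  hde : d < e

variable {p d e f : ℕ}

lemma Hyp.hd (h : Hyp p d e f) : 0 < d := lt_trans h.hf h.hfd
lemma Hyp.fd (h : Hyp p d e f) : f ≤ d := le_of_lt h.hfd
lemma Hyp.ppos (h : Hyp p d e f) : 0 < p := h.hp.pos
lemma Hyp.qpos (h : Hyp p d e f) : 0 < p ^ (d - f) := pow_pos h.ppos _

def w0 (p d f : ℕ) : ZMod (p ^ d) := ((1 + p ^ f : ℕ) : ZMod (p ^ d))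

lemma pd_zero (p d : ℕ) : ((p : ZMod (p ^ d))) ^ d = 0 := by
  rw [← Nat.cast_pow, ZMod.natCast_self]

lemma w0_pow_q (h : Hyp p d e f) : (w0 p d f) ^ (p ^ (d - f)) = 1 := by
  obtain ⟨c, hc, -⟩ := zlem4 h.hodd h.hf (d - f)
  have hfd' := h.hfd
  have hfd : f + (d - f) = d := by omega
  have h2 : ((((1 + (p:ℤ) ^ f) ^ (p ^ (d-f))) : ℤ) : ZMod (p ^ d)) = w0 p d f ^ (p ^ (d-f)) := by
    push_cast [w0]; ring
  rw [← h2, hc, hfd]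
  push_cast [pd_zero p d]
  ring

def uu (h : Hyp p d e f) : (ZMod (p ^ d))ˣ :=
  Units.mkOfMulEqOne (w0 p d f) (w0 p d f ^ (p ^ (d - f) - 1)) (by
    have h1 : p ^ (d - f) - 1 + 1 = p ^ (d - f) := Nat.succ_pred_eq_of_pos h.qpos
    calc w0 p d f * w0 p d f ^ (p ^ (d-f) - 1) = w0 p d f ^ (p ^ (d-f) - 1 + 1) := by ring
      _ = 1 := by rw [h1, w0_pow_q h])

lemma uu_val (h : Hyp p d e f) : ((uu h : (ZMod (p^d))ˣ) : ZMod (p^d)) = w0 p d f := rfl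

lemma uu_pow_q (h : Hyp p d e f) : uu h ^ (p ^ (d - f)) = 1 :=
  Units.ext (by rw [Units.val_pow_eq_pow_val, uu_val, w0_pow_q h, Units.val_one])

lemma uu_pow_pe (h : Hyp p d e f) : uu h ^ (p ^ e) = 1 := by
  have h1 : p ^ e = p ^ (d - f) * p ^ (e - (d - f)) := by
    have h2 := h.hfd; have h3 := h.hde
    rw [← pow_add]; congr 1; omega
  rw [h1, pow_mul, uu_pow_q, one_pow]

lemma exists_nat_pow {G : Type*} [Group G] {g : G} {Q : ℕ} (hQ : 0 < Q) (hg : g ^ Q = 1)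
    (t : ℤ) : ∃ s : ℕ, g ^ t = g ^ s := by
  refine ⟨(t % Q).toNat, ?_⟩
  have h0 : (0:ℤ) ≤ t % Q := Int.emod_nonneg t (by exact_mod_cast hQ.ne')
  conv_lhs => rw [← Int.mul_ediv_add_emod t Q]
  rw [zpow_add, zpow_mul, zpow_natCast, hg, one_zpow, one_mul, ← zpow_natCast,
    Int.toNat_of_nonneg h0]

def chi (h : Hyp p d e f) : Multiplicative (ZMod (p ^ e)) →* (ZMod (p ^ d))ˣ :=
  AddMonoidHom.toMultiplicativeLeft
    (ZMod.lift (p ^ e) ⟨zmultiplesHom (Additive ((ZMod (p ^ d))ˣ)) (Additive.ofMul (uu h)⁻¹), by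
      simp only [zmultiplesHom_apply]
      rw [← ofMul_zpow]
      have : ((uu h)⁻¹ : (ZMod (p^d))ˣ) ^ ((p^e : ℕ):ℤ) = 1 := by
        rw [zpow_natCast, inv_pow, uu_pow_pe, inv_one]
      rw [this, ofMul_one]⟩)

lemma chi_intCast (h : Hyp p d e f) (t : ℤ) :
    chi h (ofAdd ((t : ZMod (p ^ e)))) = (uu h)⁻¹ ^ t := by
  simp [chi, AddMonoidHom.coe_toMultiplicativeLeft, ZMod.lift_coe]

-- new material
lemma chi_natCast (h : Hyp p d e f) (s : ℕ) :
    chi h (ofAdd ((s : ZMod (p ^ e)))) = (uu h)⁻¹ ^ s := by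
  have := chi_intCast h (s : ℤ)
  rw [zpow_natCast] at this
  simpa using this

lemma chi_eq_uu_pow (h : Hyp p d e f) (x : Multiplicative (ZMod (p ^ e))) :
    ∃ s : ℕ, chi h x = (uu h) ^ s := by
  haveI : NeZero (p ^ e) := ⟨(pow_pos h.ppos e).ne'⟩
  have hx : x = ofAdd (((toAdd x).val : ℕ) : ZMod (p ^ e)) := by
    rw [ZMod.natCast_val, ZMod.cast_id]; rfl
  rw [hx, chi_natCast]
  have h1 : (uu h)⁻¹ ^ ((toAdd x).val : ℕ) = (uu h) ^ (-((toAdd x).val : ℤ)) := by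
    rw [zpow_neg, ← inv_zpow, zpow_natCast]
  rw [h1]
  exact exists_nat_pow h.qpos (uu_pow_q h) _

/-- The canonical action. -/
def phi (h : Hyp p d e f) : Multiplicative (ZMod (p ^ e)) →* MulAut (Multiplicative (ZMod (p ^ d))) :=
  MonoidHom.mk' (fun x => AddEquiv.toMultiplicative
      ((DistribMulAction.toAddAut (ZMod (p ^ d))ˣ (ZMod (p ^ d))) (chi h x)))
    (by
      intro x y
      ext n
      simp [map_mul, mul_smul]
      rfl)

lemma phi_apply (h : Hyp p d e f) (x : Multiplicative (ZMod (p ^ e)))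
    (n : Multiplicative (ZMod (p ^ d))) :
    phi h x n = ofAdd ((((chi h x) : (ZMod (p^d))ˣ) : ZMod (p^d)) * toAdd n) := by
  simp [phi, Units.smul_def, smul_eq_mul]

abbrev Gc (h : Hyp p d e f) : Type :=
  Multiplicative (ZMod (p ^ d)) ⋊[phi h] Multiplicative (ZMod (p ^ e))

def Aa (h : Hyp p d e f) : Gc h := inl (ofAdd 1)
def Bb (h : Hyp p d e f) : Gc h := inr (ofAdd 1)

lemma sub_dvd_int (p f : ℕ) (s : ℕ) : ((p:ℤ))^f ∣ (1 + (p:ℤ)^f)^s - 1 := by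
  have := sub_dvd_pow_sub_pow (1 + (p:ℤ)^f) 1 s
  simpa using this

lemma uu_pow_val (h : Hyp p d e f) (s : ℕ) :
    ((uu h ^ s : (ZMod (p^d))ˣ) : ZMod (p^d)) = (((1 + (p:ℤ)^f)^s : ℤ) : ZMod (p^d)) := by
  rw [Units.val_pow_eq_pow_val, uu_val, w0]
  push_cast
  ring

lemma uu_sub_one (h : Hyp p d e f) (s : ℕ) :
    ∃ z : ZMod (p^d), ((uu h ^ s : (ZMod (p^d))ˣ) : ZMod (p^d)) - 1 = ((p : ZMod (p^d)))^f * z := by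
  obtain ⟨z, hz⟩ := sub_dvd_int p f s
  refine ⟨((z : ℤ) : ZMod (p^d)), ?_⟩
  rw [uu_pow_val h s]
  have : (((1 + (p:ℤ)^f)^s - 1 : ℤ) : ZMod (p^d)) = (((p:ℤ)^f * z : ℤ) : ZMod (p^d)) := by
    rw [hz]
  push_cast at this ⊢
  linear_combination this

lemma pf_mul_q (p d f : ℕ) (hfd : f ≤ d) :
    ((p : ZMod (p^d)))^f * ((p^(d-f) : ℕ) : ZMod (p^d)) = 0 := by
  push_cast
  rw [← pow_add, (show f + (d - f) = d by omega), pd_zero]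

lemma mul_q (h : Hyp p d e f) (s : ℕ) :
    ((uu h ^ s : (ZMod (p^d))ˣ) : ZMod (p^d)) * ((p^(d-f) : ℕ) : ZMod (p^d))
      = ((p^(d-f) : ℕ) : ZMod (p^d)) := by
  obtain ⟨z, hz⟩ := uu_sub_one h s
  have h2 := pf_mul_q p d f (le_of_lt h.hfd)
  linear_combination ((p^(d-f) : ℕ) : ZMod (p^d)) * hz + z * h2

lemma geom_uu (h : Hyp p d e f) (s : ℕ) :
    (∑ i ∈ range (p^(d-f)), (((uu h ^ s : (ZMod (p^d))ˣ) : ZMod (p^d)))^i)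
      = ((p^(d-f) : ℕ) : ZMod (p^d)) := by
  obtain ⟨z, hz⟩ := zlem5 h.hodd (d - f) f h.hf ((1 + (p:ℤ)^f)^s) (sub_dvd_int p f s)
  have hfd : f + (d - f) = d := by have := h.hfd; omega
  rw [hfd] at hz
  have hcast : (((∑ i ∈ range (p^(d-f)), ((1 + (p:ℤ)^f)^s) ^ i) : ℤ) : ZMod (p^d))
      = (∑ i ∈ range (p^(d-f)), (((uu h ^ s : (ZMod (p^d))ˣ) : ZMod (p^d)))^i) := by
    push_cast [uu_pow_val h s]
    push_cast
    ring
  have hz' : (((∑ i ∈ range (p^(d-f)), ((1 + (p:ℤ)^f)^s) ^ i) : ℤ) : ZMod (p^d))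
      = (((p:ℤ)^(d-f) + (p:ℤ)^d * z : ℤ) : ZMod (p^d)) := by
    rw [(show ((p:ℤ)^(d-f) + (p:ℤ)^d * z : ℤ)
        = (∑ i ∈ range (p^(d-f)), ((1 + (p:ℤ)^f)^s) ^ i) from by linarith)]
  rw [← hcast, hz']
  push_cast [pd_zero]
  ring

lemma pow_left_formula (h : Hyp p d e f) (x : Gc h) (t : ℕ) :
    x ^ t = ⟨ofAdd ((∑ i ∈ range t, ((((chi h x.right) : (ZMod (p^d))ˣ) : ZMod (p^d)))^i)
        * toAdd x.left), x.right ^ t⟩ := by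
  induction t with
  | zero => ext <;> simp
  | succ t ih =>
    rw [pow_succ, ih]
    ext : 1
    · show ofAdd _ * (phi h (x.right ^ t)) x.left = ofAdd _
      rw [phi_apply, map_pow, Units.val_pow_eq_pow_val]
      show ofAdd _ * ofAdd _ = ofAdd _
      rw [← ofAdd_add]
      congr 1
      rw [Finset.sum_range_succ]
      ring
    · show x.right ^ t * x.right = x.right ^ (t + 1)
      rw [pow_succ]

theorem pabelian (h : Hyp p d e f) (x y : Gc h) :
    (x * y) ^ (p^(d-f)) = x ^ (p^(d-f)) * y ^ (p^(d-f)) := by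
  obtain ⟨s₁, hs₁⟩ := chi_eq_uu_pow h x.right
  obtain ⟨s₂, hs₂⟩ := chi_eq_uu_pow h y.right
  have hs₁₂ : chi h ((x * y).right) = uu h ^ (s₁ + s₂) := by
    rw [mul_right, map_mul, hs₁, hs₂, pow_add]
  have hC : ((chi h (x.right ^ (p^(d-f))) : (ZMod (p^d))ˣ) : ZMod (p^d)) = 1 := by
    rw [map_pow, hs₁, ← pow_mul, mul_comm s₁, pow_mul, uu_pow_q, one_pow, Units.val_one]
  rw [pow_left_formula h (x * y), pow_left_formula h x, pow_left_formula h y]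
  ext : 1
  · show ofAdd _ = ofAdd _ * (phi h (x.right ^ (p^(d-f)))) _
    rw [phi_apply, hC]
    show ofAdd _ = ofAdd _ * ofAdd _
    rw [← ofAdd_add]
    congr 1
    rw [hs₁₂, hs₁, hs₂, geom_uu, geom_uu, geom_uu, mul_left, toAdd_mul, phi_apply, hs₁,
      toAdd_ofAdd]
    simp only [toAdd_ofAdd]
    have hq := mul_q h s₁
    linear_combination (toAdd y.left) * hq
  · show _ = x.right ^ _ * y.right ^ _
    rw [mul_right, mul_pow]

lemma uu_pow_ne_one (h : Hyp p d e f) : uu h ^ (p ^ (d - f - 1)) ≠ 1 := by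
  intro hcon
  have hval : ((uu h ^ (p ^ (d - f - 1)) : (ZMod (p^d))ˣ) : ZMod (p^d)) = 1 :=
    congrArg Units.val hcon
  rw [uu_pow_val h] at hval
  have hz : ((((1 + (p:ℤ)^f) ^ (p ^ (d - f - 1)) - 1 : ℤ)) : ZMod (p^d)) = 0 := by
    push_cast at hval ⊢
    linear_combination hval
  rw [ZMod.intCast_zmod_eq_zero_iff_dvd] at hz
  obtain ⟨c, hc, hc1⟩ := zlem4 h.hodd h.hf (d - f - 1)
  have hfd : f + (d - f - 1) = d - 1 := by have := h.hfd; omega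
  rw [hc, hfd] at hz
  have hz' : ((p:ℤ))^(d-1) * p ∣ ((p:ℤ))^(d-1) * c := by
    have hd1 : (p:ℤ)^d = (p:ℤ)^(d-1) * p := by
      rw [← pow_succ]; congr 1; have := h.hfd; have := h.hf; omega
    rw [← hd1]
    push_cast at hz ⊢
    convert hz using 1
    ring
  have hpc : (p:ℤ) ∣ c := (mul_dvd_mul_iff_left (a := ((p:ℤ))^(d-1))
    (pow_ne_zero _ (by exact_mod_cast h.ppos.ne'))).mp hz'
  have h1 : (p:ℤ) ∣ 1 := by
    have : (1:ℤ) = c - (c - 1) := by ring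
    rw [this]
    exact dvd_sub hpc hc1
  have := Int.le_of_dvd one_pos h1
  have := h.hp.two_le
  omega

lemma ord_uu (h : Hyp p d e f) : orderOf (uu h) = p ^ (d - f) := by
  obtain ⟨m, hm, hord⟩ := (Nat.dvd_prime_pow h.hp).mp
    (orderOf_dvd_of_pow_eq_one (uu_pow_q h))
  rcases eq_or_lt_of_le hm with heq | hlt
  · rw [hord, heq]
  · exfalso
    apply uu_pow_ne_one h
    apply orderOf_dvd_iff_pow_eq_one.mp
    rw [hord]
    exact pow_dvd_pow _ (by omega)

lemma chi_one_exp (h : Hyp p d e f) (x : Multiplicative (ZMod (p ^ e)))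
    (hx : chi h x = 1) : ∃ m : ℕ, x = ofAdd (((p^(d-f)) * m : ℕ) : ZMod (p^e)) := by
  haveI : NeZero (p ^ e) := ⟨(pow_pos h.ppos e).ne'⟩
  have hxrep : x = ofAdd (((toAdd x).val : ℕ) : ZMod (p ^ e)) := by
    rw [ZMod.natCast_val, ZMod.cast_id]; rfl
  rw [hxrep, chi_natCast] at hx
  have hu : uu h ^ ((toAdd x).val : ℕ) = 1 := by
    rw [← inv_inv (uu h ^ _), ← inv_pow, hx, inv_one]
  have hdvd : p ^ (d - f) ∣ (toAdd x).val := by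
    rw [← ord_uu h]
    exact orderOf_dvd_of_pow_eq_one hu
  obtain ⟨m, hmm⟩ := hdvd
  exact ⟨m, by rw [hxrep, hmm]⟩

lemma pf_ann_exp (h : Hyp p d e f) (n : ZMod (p ^ d))
    (hn : ((p : ZMod (p^d)))^f * n = 0) : ∃ m : ℕ, n = (((p^(d-f)) * m : ℕ) : ZMod (p^d)) := by
  haveI : NeZero (p ^ d) := ⟨(pow_pos h.ppos d).ne'⟩
  have hrep : n = ((n.val : ℕ) : ZMod (p ^ d)) := by rw [ZMod.natCast_val, ZMod.cast_id]
  have hcast : (((p^f * n.val : ℕ)) : ZMod (p ^ d)) = 0 := by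
    push_cast
    rw [← hrep]
    exact hn
  rw [ZMod.natCast_eq_zero_iff] at hcast
  have hsplit : p ^ d = p ^ f * p ^ (d - f) := by
    rw [← pow_add]; congr 1; have := h.hfd; omega
  have hcast2 : p ^ f * p ^ (d - f) ∣ p ^ f * n.val := by rw [← hsplit]; exact hcast
  have hdvd : p ^ (d - f) ∣ n.val :=
    (Nat.mul_dvd_mul_iff_left (pow_pos h.ppos f)).mp hcast2
  obtain ⟨m, hmm⟩ := hdvd
  exact ⟨m, by rw [hrep, hmm]⟩

lemma Aa_pow (h : Hyp p d e f) (n : ℕ) :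
    (Aa h) ^ n = inl (ofAdd ((n : ZMod (p^d)))) := by
  rw [Aa, ← map_pow]
  congr 1
  rw [← ofAdd_nsmul]
  congr 1
  rw [nsmul_eq_mul, mul_one]

lemma Bb_pow (h : Hyp p d e f) (n : ℕ) :
    (Bb h) ^ n = inr (ofAdd ((n : ZMod (p^e)))) := by
  rw [Bb, ← map_pow]
  congr 1
  rw [← ofAdd_nsmul]
  congr 1
  rw [nsmul_eq_mul, mul_one]

lemma chi_ofAdd_q (h : Hyp p d e f) :
    chi h (ofAdd (((p^(d-f) : ℕ)) : ZMod (p^e))) = 1 := by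
  rw [chi_natCast, inv_pow, uu_pow_q, inv_one]

theorem center_eq (h : Hyp p d e f) :
    Subgroup.center (Gc h) = Subgroup.closure {Aa h ^ (p^(d-f)), Bb h ^ (p^(d-f))} := by
  apply le_antisymm
  · intro g hg
    rw [Subgroup.mem_center_iff] at hg
    have hA := congrArg SemidirectProduct.left (hg (Aa h))
    have hB := congrArg SemidirectProduct.left (hg (Bb h))
    rw [Aa, mul_left, mul_left, left_inl, right_inl, map_one (phi h), MulAut.one_apply,
      phi_apply, toAdd_ofAdd] at hA
    rw [Bb, mul_left, mul_left, left_inr, right_inr] at hB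
    simp only [phi_apply, toAdd_one, mul_zero, ofAdd_zero, mul_one, one_mul] at hB
    -- hA : ofAdd 1 * g.left = g.left * ofAdd (c * 1)
    have hA' := congrArg toAdd hA
    simp only [toAdd_mul, toAdd_ofAdd] at hA'
    have hchi : chi h g.right = 1 := by
      apply Units.ext
      rw [Units.val_one]
      linear_combination -hA'
    have hann : ((p : ZMod (p^d)))^f * toAdd g.left = 0 := by
      have hB' := congrArg toAdd hB
      simp only [toAdd_mul, toAdd_ofAdd] at hB'
      -- hB' : chi(ofAdd 1).val * toAdd g.left = toAdd g.left (roughly)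
      have h2 : chi h (ofAdd (1 : ZMod (p^e))) = (uu h)⁻¹ := by
        have h21 := chi_natCast h 1
        rw [pow_one] at h21
        rw [← h21]
        norm_num
      rw [h2] at hB'
      have h3 : ((uu h : (ZMod (p^d))ˣ) : ZMod (p^d)) * (((uu h)⁻¹ : (ZMod (p^d))ˣ) : ZMod (p^d))
          = 1 := by
        rw [← Units.val_mul, mul_inv_cancel, Units.val_one]
      have h5 : ((uu h : (ZMod (p^d))ˣ) : ZMod (p^d)) - 1 = ((p : ZMod (p^d)))^f := by
        rw [uu_val, w0]
        push_cast
        ring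
      linear_combination (toAdd g.left) * h3 - (toAdd g.left) * h5
        - ((uu h : (ZMod (p^d))ˣ) : ZMod (p^d)) * hB'
    obtain ⟨m₁, hm₁⟩ := pf_ann_exp h (toAdd g.left) hann
    obtain ⟨m₂, hm₂⟩ := chi_one_exp h g.right hchi
    rw [← inl_left_mul_inr_right g]
    apply Subgroup.mul_mem
    · have h6 : g.left = ofAdd (((p^(d-f)) * m₁ : ℕ) : ZMod (p^d)) := by
        rw [← hm₁, ofAdd_toAdd]
      rw [h6, ← Aa_pow h (p^(d-f) * m₁), pow_mul]
      exact Subgroup.pow_mem _ (Subgroup.subset_closure (Set.mem_insert _ _)) _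
    · rw [hm₂, ← Bb_pow h (p^(d-f) * m₂), pow_mul]
      exact Subgroup.pow_mem _ (Subgroup.subset_closure
        (Set.mem_insert_of_mem _ (Set.mem_singleton _))) _
  · rw [Subgroup.closure_le]
    intro z hz
    rcases hz with rfl | hz
    · rw [SetLike.mem_coe, Subgroup.mem_center_iff]
      intro k
      rw [Aa_pow]
      ext
      · rw [mul_left, mul_left, left_inl, right_inl, map_one (phi h), MulAut.one_apply,
          phi_apply, toAdd_ofAdd]
        obtain ⟨s, hs⟩ := chi_eq_uu_pow h k.right
        rw [hs, mul_q h s, mul_comm]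
      · rw [mul_right, mul_right, right_inl, mul_one, one_mul]
    · rw [Set.mem_singleton_iff] at hz
      subst hz
      rw [SetLike.mem_coe, Subgroup.mem_center_iff]
      intro k
      rw [Bb_pow]
      ext : 1
      · rw [mul_left, mul_left, left_inr, right_inr]
        simp only [phi_apply, chi_ofAdd_q, Units.val_one, toAdd_one, mul_zero, ofAdd_zero,
          mul_one, one_mul, ofAdd_toAdd]
      · rw [mul_right, mul_right, right_inr]
        exact mul_comm _ _


-- ===================== M2 side =====================

lemma mk_rel {r : FreeGroup (Fin 2)} (hr : r ∈ M2rels p d e f) :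
    PresentedGroup.mk (M2rels p d e f) r = 1 :=
  (QuotientGroup.eq_one_iff _).mpr (Subgroup.subset_normalClosure hr)

lemma aM_pow : (M2a p d e f) ^ (p^d) = 1 := by
  have h1 := mk_rel (show FreeGroup.of 0 ^ p ^ d ∈ M2rels p d e f from Set.mem_insert _ _)
  rw [map_pow] at h1
  exact h1

lemma bM_pow : (M2b p d e f) ^ (p^e) = 1 := by
  have h1 := mk_rel (show FreeGroup.of 1 ^ p ^ e ∈ M2rels p d e f from
    Set.mem_insert_of_mem _ (Set.mem_insert _ _))
  rw [map_pow] at h1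
  exact h1

lemma conj_rel :
    (M2b p d e f)⁻¹ * M2a p d e f * M2b p d e f = (M2a p d e f) ^ (1 + p^f) := by
  have h1 := mk_rel (show (FreeGroup.of 1)⁻¹ * FreeGroup.of 0 * FreeGroup.of 1
      * (FreeGroup.of 0 ^ (1 + p ^ f))⁻¹ ∈ M2rels p d e f from
    Set.mem_insert_of_mem _ (Set.mem_insert_of_mem _ (Set.mem_singleton _)))
  rw [map_mul, map_mul, map_mul, map_inv, map_inv, map_pow] at h1
  exact mul_inv_eq_one.mp h1

lemma a_exp_mod {m n : ℕ} (hmn : ((m : ℕ) : ZMod (p^d)) = ((n : ℕ) : ZMod (p^d))) :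
    (M2a p d e f) ^ m = (M2a p d e f) ^ n := by
  apply pow_eq_pow_iff_modEq.mpr
  exact (Nat.ModEq.of_dvd (orderOf_dvd_of_pow_eq_one aM_pow)
    ((ZMod.natCast_eq_natCast_iff _ _ _).mp hmn))

lemma conj_pow_nat (n : ℕ) :
    (M2b p d e f)⁻¹ * (M2a p d e f)^n * M2b p d e f = (M2a p d e f) ^ (n * (1 + p^f)) := by
  calc (M2b p d e f)⁻¹ * (M2a p d e f)^n * M2b p d e f
      = (MulAut.conj (M2b p d e f)⁻¹) ((M2a p d e f)^n) := by
        rw [MulAut.conj_apply, inv_inv]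
    _ = ((MulAut.conj (M2b p d e f)⁻¹) (M2a p d e f))^n := by rw [map_pow]
    _ = ((M2b p d e f)⁻¹ * M2a p d e f * M2b p d e f)^n := by
        rw [MulAut.conj_apply, inv_inv]
    _ = ((M2a p d e f)^(1 + p^f))^n := by rw [conj_rel]
    _ = (M2a p d e f) ^ (n * (1 + p^f)) := by rw [← pow_mul, Nat.mul_comm]

lemma conj_pow_iter (s n : ℕ) :
    ((M2b p d e f)^s)⁻¹ * (M2a p d e f)^n * (M2b p d e f)^s
      = (M2a p d e f) ^ (n * (1 + p^f)^s) := by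
  induction s generalizing n with
  | zero => simp
  | succ s ih =>
    have h1 : ((M2b p d e f)^(s+1))⁻¹ * (M2a p d e f)^n * (M2b p d e f)^(s+1)
        = (M2b p d e f)⁻¹ * (((M2b p d e f)^s)⁻¹ * (M2a p d e f)^n * (M2b p d e f)^s)
          * M2b p d e f := by
      group
    rw [h1, ih, conj_pow_nat, mul_assoc, ← pow_succ]

def f1 (h : Hyp p d e f) : Multiplicative (ZMod (p ^ d)) →* M2 p d e f :=
  AddMonoidHom.toMultiplicativeLeft
    (ZMod.lift (p ^ d) ⟨zmultiplesHom (Additive (M2 p d e f)) (Additive.ofMul (M2a p d e f)), by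
      simp only [zmultiplesHom_apply]
      rw [← ofMul_zpow]
      have h1 : (M2a p d e f) ^ ((p^d : ℕ):ℤ) = 1 := by
        rw [zpow_natCast, aM_pow]
      rw [h1, ofMul_one]⟩)

def f2 (h : Hyp p d e f) : Multiplicative (ZMod (p ^ e)) →* M2 p d e f :=
  AddMonoidHom.toMultiplicativeLeft
    (ZMod.lift (p ^ e) ⟨zmultiplesHom (Additive (M2 p d e f)) (Additive.ofMul (M2b p d e f)), by
      simp only [zmultiplesHom_apply]
      rw [← ofMul_zpow]
      have h1 : (M2b p d e f) ^ ((p^e : ℕ):ℤ) = 1 := by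
        rw [zpow_natCast, bM_pow]
      rw [h1, ofMul_one]⟩)

lemma f1_intCast (h : Hyp p d e f) (t : ℤ) :
    f1 h (ofAdd ((t : ZMod (p ^ d)))) = (M2a p d e f) ^ t := by
  simp [f1, AddMonoidHom.coe_toMultiplicativeLeft, ZMod.lift_coe]

lemma f2_intCast (h : Hyp p d e f) (t : ℤ) :
    f2 h (ofAdd ((t : ZMod (p ^ e)))) = (M2b p d e f) ^ t := by
  simp [f2, AddMonoidHom.coe_toMultiplicativeLeft, ZMod.lift_coe]

lemma f1_natCast (h : Hyp p d e f) (t : ℕ) :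
    f1 h (ofAdd ((t : ZMod (p ^ d)))) = (M2a p d e f) ^ t := by
  have h1 := f1_intCast h (t : ℤ)
  rw [zpow_natCast] at h1
  simpa using h1

lemma f2_natCast (h : Hyp p d e f) (t : ℕ) :
    f2 h (ofAdd ((t : ZMod (p ^ e)))) = (M2b p d e f) ^ t := by
  have h1 := f2_intCast h (t : ℤ)
  rw [zpow_natCast] at h1
  simpa using h1

lemma compat (h : Hyp p d e f) : ∀ x : Multiplicative (ZMod (p ^ e)),
    (f1 h).comp ((phi h) x).toMonoidHom
      = (MulAut.conj ((f2 h) x)).toMonoidHom.comp (f1 h) := by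
  haveI : NeZero (p ^ e) := ⟨(pow_pos h.ppos e).ne'⟩
  haveI : NeZero (p ^ d) := ⟨(pow_pos h.ppos d).ne'⟩
  intro x
  apply MonoidHom.ext
  intro n
  simp only [MonoidHom.comp_apply, MulEquiv.coe_toMonoidHom, MulAut.conj_apply]
  set sx := (toAdd x).val with hsx
  set tn := (toAdd n).val with htn
  have hxrep : x = ofAdd ((sx : ℕ) : ZMod (p ^ e)) := by
    rw [hsx, ZMod.natCast_val, ZMod.cast_id]; rfl
  have hnrep : n = ofAdd ((tn : ℕ) : ZMod (p ^ d)) := by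
    rw [htn, ZMod.natCast_val, ZMod.cast_id]; rfl
  rw [hxrep, hnrep, phi_apply, chi_natCast, f2_natCast, toAdd_ofAdd]
  set c : ZMod (p^d) := (((uu h)⁻¹ ^ sx : (ZMod (p^d))ˣ) : ZMod (p^d)) with hc
  set M := (c * ((tn : ℕ) : ZMod (p^d))).val with hM
  have hval : ((M : ℕ) : ZMod (p^d)) = c * ((tn : ℕ) : ZMod (p^d)) := by
    rw [hM, ZMod.natCast_val, ZMod.cast_id]
  have hf1M : f1 h (ofAdd (c * ((tn : ℕ) : ZMod (p^d)))) = (M2a p d e f) ^ M := by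
    rw [← hval, f1_natCast]
  rw [hf1M, f1_natCast]
  have hexp : ((M * (1 + p^f)^sx : ℕ) : ZMod (p^d)) = ((tn : ℕ) : ZMod (p^d)) := by
    push_cast
    rw [hM, ZMod.natCast_val, ZMod.cast_id]
    have hw : ((1 : ZMod (p^d)) + (p : ZMod (p^d))^f)^sx
        = (((uu h) ^ sx : (ZMod (p^d))ˣ) : ZMod (p^d)) := by
      rw [Units.val_pow_eq_pow_val, uu_val, w0]
      push_cast
      ring
    rw [hw, hc]
    have huv : (((uu h)⁻¹ ^ sx : (ZMod (p^d))ˣ) : ZMod (p^d))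
        * (((uu h) ^ sx : (ZMod (p^d))ˣ) : ZMod (p^d)) = 1 := by
      rw [← Units.val_mul, ← mul_pow, inv_mul_cancel, one_pow, Units.val_one]
    calc ((uu h)⁻¹ ^ sx : (ZMod (p^d))ˣ).val * (tn : ZMod (p^d)) * ((uu h) ^ sx : (ZMod (p^d))ˣ).val
        = (((uu h)⁻¹ ^ sx : (ZMod (p^d))ˣ).val * ((uu h) ^ sx : (ZMod (p^d))ˣ).val)
          * (tn : ZMod (p^d)) := by ring
      _ = (tn : ZMod (p^d)) := by rw [huv, one_mul]
  have key : (M2a p d e f) ^ tn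
      = ((M2b p d e f)^sx)⁻¹ * (M2a p d e f) ^ M * (M2b p d e f)^sx := by
    rw [conj_pow_iter]
    exact (a_exp_mod hexp).symm
  rw [key]
  group

lemma conj_in_Gc (h : Hyp p d e f) :
    (Bb h)⁻¹ * Aa h * Bb h = (Aa h) ^ (1 + p^f) := by
  have h1 := inl_aut (φ := phi h) ((ofAdd (1 : ZMod (p^e)))⁻¹) (ofAdd (1 : ZMod (p^d)))
  rw [inv_inv] at h1
  have h2 : phi h (ofAdd (1 : ZMod (p^e)))⁻¹ (ofAdd (1 : ZMod (p^d)))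
      = ofAdd (((1 + p^f : ℕ)) : ZMod (p^d)) := by
    rw [phi_apply, map_inv]
    have h21 : chi h (ofAdd (1 : ZMod (p^e))) = (uu h)⁻¹ := by
      have h22 := chi_natCast h 1
      rw [pow_one] at h22
      rw [← h22]
      norm_num
    rw [h21, inv_inv, uu_val, toAdd_ofAdd, mul_one, w0]
  rw [h2] at h1
  have h3 : inl (ofAdd (((1 + p^f : ℕ)) : ZMod (p^d))) = (Aa h) ^ (1 + p^f) :=
    (Aa_pow h _).symm
  rw [h3, map_inv] at h1
  exact h1.symm

lemma Frels (h : Hyp p d e f) : ∀ r ∈ M2rels p d e f,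
    FreeGroup.lift (![Aa h, Bb h] : Fin 2 → Gc h) r = 1 := by
  intro r hr
  simp only [M2rels, Set.mem_insert_iff, Set.mem_singleton_iff] at hr
  rcases hr with rfl | rfl | rfl
  · rw [map_pow, FreeGroup.lift_apply_of]
    show (Aa h) ^ (p^d) = 1
    rw [Aa_pow, ZMod.natCast_self, ofAdd_zero, map_one]
  · rw [map_pow, FreeGroup.lift_apply_of]
    show (Bb h) ^ (p^e) = 1
    rw [Bb_pow, ZMod.natCast_self, ofAdd_zero, map_one]
  · rw [map_mul, map_mul, map_mul, map_inv, map_inv, map_pow, FreeGroup.lift_apply_of,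
      FreeGroup.lift_apply_of]
    show (Bb h)⁻¹ * Aa h * Bb h * ((Aa h) ^ (1 + p^f))⁻¹ = 1
    rw [mul_inv_eq_one, conj_in_Gc h]

def phiM (h : Hyp p d e f) : M2 p d e f →* Gc h := PresentedGroup.toGroup (Frels h)

lemma phiM_a (h : Hyp p d e f) : phiM h (M2a p d e f) = Aa h := by
  have h1 : phiM h (PresentedGroup.of 0) = (![Aa h, Bb h] : Fin 2 → Gc h) 0 :=
    PresentedGroup.toGroup.of (Frels h)
  simpa [M2a] using h1

lemma phiM_b (h : Hyp p d e f) : phiM h (M2b p d e f) = Bb h := by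
  have h1 : phiM h (PresentedGroup.of 1) = (![Aa h, Bb h] : Fin 2 → Gc h) 1 :=
    PresentedGroup.toGroup.of (Frels h)
  simpa [M2b] using h1

def psi (h : Hyp p d e f) : Gc h →* M2 p d e f :=
  SemidirectProduct.lift (f1 h) (f2 h) (compat h)

lemma psi_phiM (h : Hyp p d e f) : (psi h).comp (phiM h) = MonoidHom.id (M2 p d e f) := by
  apply PresentedGroup.ext
  intro i
  fin_cases i
  · show psi h (phiM h (M2a p d e f)) = M2a p d e f
    rw [phiM_a, Aa, psi, SemidirectProduct.lift_inl]
    have h1 : (ofAdd (1 : ZMod (p^d))) = ofAdd (((1:ℕ)) : ZMod (p^d)) := by norm_num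
    rw [h1, f1_natCast, pow_one]
  · show psi h (phiM h (M2b p d e f)) = M2b p d e f
    rw [phiM_b, Bb, psi, SemidirectProduct.lift_inr]
    have h1 : (ofAdd (1 : ZMod (p^e))) = ofAdd (((1:ℕ)) : ZMod (p^e)) := by norm_num
    rw [h1, f2_natCast, pow_one]

lemma phiM_psi (h : Hyp p d e f) : (phiM h).comp (psi h) = MonoidHom.id (Gc h) := by
  haveI : NeZero (p ^ e) := ⟨(pow_pos h.ppos e).ne'⟩
  haveI : NeZero (p ^ d) := ⟨(pow_pos h.ppos d).ne'⟩
  apply SemidirectProduct.hom_ext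
  · apply MonoidHom.ext
    intro n
    have hnrep : n = ofAdd (((toAdd n).val : ℕ) : ZMod (p ^ d)) := by
      rw [ZMod.natCast_val, ZMod.cast_id]; rfl
    simp only [MonoidHom.comp_apply, MonoidHom.id_apply]
    rw [hnrep]
    rw [show psi h (inl (ofAdd (((toAdd n).val : ℕ) : ZMod (p ^ d))))
        = f1 h (ofAdd (((toAdd n).val : ℕ) : ZMod (p ^ d))) from
      SemidirectProduct.lift_inl _ _ _ _]
    rw [f1_natCast, map_pow, phiM_a, Aa_pow]
  · apply MonoidHom.ext
    intro n
    have hnrep : n = ofAdd (((toAdd n).val : ℕ) : ZMod (p ^ e)) := by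
      rw [ZMod.natCast_val, ZMod.cast_id]; rfl
    simp only [MonoidHom.comp_apply, MonoidHom.id_apply]
    rw [hnrep]
    rw [show psi h (inr (ofAdd (((toAdd n).val : ℕ) : ZMod (p ^ e))))
        = f2 h (ofAdd (((toAdd n).val : ℕ) : ZMod (p ^ e))) from
      SemidirectProduct.lift_inr _ _ _ _]
    rw [f2_natCast, map_pow, phiM_b, Bb_pow]

def isoM (h : Hyp p d e f) : M2 p d e f ≃* Gc h :=
  MonoidHom.toMulEquiv (phiM h) (psi h) (psi_phiM h) (phiM_psi h)

theorem main (h : Hyp p d e f) :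
    (∀ x y : M2 p d e f, (x * y) ^ p ^ (d - f) = x ^ p ^ (d - f) * y ^ p ^ (d - f)) ∧
    Subgroup.center (M2 p d e f) =
      Subgroup.closure {M2a p d e f ^ p ^ (d - f), M2b p d e f ^ p ^ (d - f)} := by
  constructor
  · intro x y
    apply (isoM h).injective
    rw [map_pow, map_mul, map_mul, map_pow, map_pow]
    exact pabelian h _ _
  · have hcen : Subgroup.center (M2 p d e f)
        = Subgroup.comap (isoM h).toMonoidHom (Subgroup.center (Gc h)) := by
      ext z
      rw [Subgroup.mem_comap, Subgroup.mem_center_iff, Subgroup.mem_center_iff]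
      simp only [MulEquiv.coe_toMonoidHom]
      constructor
      · intro hz g'
        obtain ⟨g, rfl⟩ := (isoM h).surjective g'
        rw [← map_mul, ← map_mul, hz g]
      · intro hz g
        apply (isoM h).injective
        rw [map_mul, map_mul]
        exact hz ((isoM h) g)
    rw [hcen, center_eq h]
    have e1 : (isoM h).toMonoidHom (M2a p d e f ^ p ^ (d - f)) = Aa h ^ p ^ (d - f) := by
      rw [map_pow]
      exact congrArg (· ^ p ^ (d - f)) (phiM_a h)
    have e2 : (isoM h).toMonoidHom (M2b p d e f ^ p ^ (d - f)) = Bb h ^ p ^ (d - f) := by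
      rw [map_pow]
      exact congrArg (· ^ p ^ (d - f)) (phiM_b h)
    have himg : Subgroup.map (isoM h).toMonoidHom
        (Subgroup.closure {M2a p d e f ^ p ^ (d - f), M2b p d e f ^ p ^ (d - f)})
        = Subgroup.closure {Aa h ^ p ^ (d - f), Bb h ^ p ^ (d - f)} := by
      rw [MonoidHom.map_closure, Set.image_insert_eq, Set.image_singleton, e1, e2]
    rw [← himg]
    exact Subgroup.comap_map_eq_self_of_injective (f := (isoM h).toMonoidHom)
      ((isoM h).injective) _


end Stmt5Aux

/-- For an odd prime `p` and positive `d, e, f` with `f < d < e`, the group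
`G = M₂(p,d,e,f)` is `p^(d-f)`-abelian and its center is generated by `a^(p^(d-f))` and
`b^(p^(d-f))`. -/
theorem stmt_5 (p d e f : ℕ) (hp : p.Prime) (hodd : Odd p)
    (hf : 0 < f) (hfd : f < d) (hde : d < e) :
    (∀ x y : M2 p d e f, (x * y) ^ p ^ (d - f) = x ^ p ^ (d - f) * y ^ p ^ (d - f)) ∧
    Subgroup.center (M2 p d e f) =
      Subgroup.closure {M2a p d e f ^ p ^ (d - f), M2b p d e f ^ p ^ (d - f)} :=
  Stmt5Aux.main ⟨hp, hodd, hf, hfd, hde⟩
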